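/- Let $G = (X \cup Y, E)$ be the bipartite graph where $|Y| = n$, $X$ has one vertex $x_{uv}$ for each unordered pair $\{u,v\}$ of distinct vertices of $Y$, and $x_{uv}$ is adjacent exactly to $u$ and $v$. Then $G$ is $C_4$-free and $Y$ is an identifying code of $G$, so $G$ has $n + \binom{n}{2}$ vertices and an identifying code of size $n$. -/

import Mathlib

/-- The bipartite graph with one side `Y = ι` and the other side consisting of one vertex
for each unordered pair of distinct elements of `ι`, each pair-vertex adjacent exactly
to the two elements of its pair. -/
def pairGraph (ι : Type*) : SimpleGraph (ι ⊕ {p : Sym2 ι // ¬ p.IsDiag}) where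
  Adj x y :=
    match x, y with
    | Sum.inl u, Sum.inr p => u ∈ p.val
    | Sum.inr p, Sum.inl u => u ∈ p.val
    | _, _ => False
  symm := ⟨by rintro (u | p) (v | q) h <;> first | exact h.elim | exact h⟩
  loopless := ⟨by rintro (u | p) h <;> exact h⟩

lemma pairGraph_eq_of_mem {ι : Type*} {u v : ι} {p q : {p : Sym2 ι // ¬ p.IsDiag}}
    (huv : u ≠ v) (hup : u ∈ p.val) (hvp : v ∈ p.val) (huq : u ∈ q.val) (hvq : v ∈ q.val) :
    p = q := by
  have h1 : p.val = s(u, v) := (Sym2.mem_and_mem_iff huv).mp ⟨hup, hvp⟩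
  have h2 : q.val = s(u, v) := (Sym2.mem_and_mem_iff huv).mp ⟨huq, hvq⟩
  exact Subtype.ext (h1.trans h2.symm)

/-- The pair graph on `n` points is `C₄`-free, has `n + n.choose 2` vertices, and
`Y` (the copy of `ι`) is an identifying code of it (of size `n`). -/
theorem stmt7 {ι : Type*} [Fintype ι] [DecidableEq ι] :
    (¬ ∃ a b c d : ι ⊕ {p : Sym2 ι // ¬ p.IsDiag},
        a ≠ b ∧ a ≠ c ∧ a ≠ d ∧ b ≠ c ∧ b ≠ d ∧ c ≠ d ∧
        (pairGraph ι).Adj a b ∧ (pairGraph ι).Adj b c ∧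
        (pairGraph ι).Adj c d ∧ (pairGraph ι).Adj d a) ∧
    (∀ v : ι ⊕ {p : Sym2 ι // ¬ p.IsDiag},
      ∃ y : ι, Sum.inl y = v ∨ (pairGraph ι).Adj v (Sum.inl y)) ∧
    (∀ u v : ι ⊕ {p : Sym2 ι // ¬ p.IsDiag},
      {y : ι | Sum.inl y = u ∨ (pairGraph ι).Adj u (Sum.inl y)} =
        {y : ι | Sum.inl y = v ∨ (pairGraph ι).Adj v (Sum.inl y)} → u = v) ∧
    Fintype.card (ι ⊕ {p : Sym2 ι // ¬ p.IsDiag}) =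
      Fintype.card ι + (Fintype.card ι).choose 2 := by
  refine ⟨?_, ?_, ?_, ?_⟩
  · rintro ⟨(a | a), (b | b), (c | c), (d | d),
      hab, hac, had, hbc, hbd, hcd, h1, h2, h3, h4⟩ <;>
      simp only [pairGraph] at h1 h2 h3 h4
    · -- a, c are inl; b, d are inr
      have hac' : a ≠ c := fun h => hac (by rw [h])
      exact hbd (congrArg Sum.inr (pairGraph_eq_of_mem hac' h1 h2 h4 h3))
    · have hbd' : b ≠ d := fun h => hbd (by rw [h])
      exact hac (congrArg Sum.inr (pairGraph_eq_of_mem hbd' h1 h4 h2 h3))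
  · rintro (u | p)
    · exact ⟨u, Or.inl rfl⟩
    · obtain ⟨p, hp⟩ := p
      induction p using Sym2.ind with
      | _ a b => exact ⟨a, Or.inr (Sym2.mem_mk_left a b)⟩
  · rintro (u | p) (v | q) h
    · have := Set.ext_iff.mp h u
      simp [pairGraph] at this
      exact congrArg Sum.inl this
    · exfalso
      obtain ⟨a, b, hab, hpq⟩ : ∃ a b, a ≠ b ∧ q.val = s(a, b) := by
        obtain ⟨q, hq⟩ := q
        induction q using Sym2.ind with
        | _ a b => exact ⟨a, b, fun h => hq (Sym2.mk_isDiag_iff.mpr h), rfl⟩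
      have ha : a ∈ {y : ι | Sum.inl y = Sum.inr q ∨ (pairGraph ι).Adj (Sum.inr q) (Sum.inl y)} :=
        Or.inr (by simp [pairGraph, hpq])
      have hb : b ∈ {y : ι | Sum.inl y = Sum.inr q ∨ (pairGraph ι).Adj (Sum.inr q) (Sum.inl y)} :=
        Or.inr (by simp [pairGraph, hpq])
      rw [← h] at ha hb
      rcases ha with ha | ha
      · rcases hb with hb | hb
        · exact hab ((Sum.inl.inj ha).trans (Sum.inl.inj hb).symm)
        · exact absurd hb (by simp [pairGraph])
      · exact absurd ha (by simp [pairGraph])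
    · exfalso
      obtain ⟨a, b, hab, hpq⟩ : ∃ a b, a ≠ b ∧ p.val = s(a, b) := by
        obtain ⟨p, hp⟩ := p
        induction p using Sym2.ind with
        | _ a b => exact ⟨a, b, fun h => hp (Sym2.mk_isDiag_iff.mpr h), rfl⟩
      have ha : a ∈ {y : ι | Sum.inl y = Sum.inr p ∨ (pairGraph ι).Adj (Sum.inr p) (Sum.inl y)} :=
        Or.inr (by simp [pairGraph, hpq])
      have hb : b ∈ {y : ι | Sum.inl y = Sum.inr p ∨ (pairGraph ι).Adj (Sum.inr p) (Sum.inl y)} :=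
        Or.inr (by simp [pairGraph, hpq])
      rw [h] at ha hb
      rcases ha with ha | ha
      · rcases hb with hb | hb
        · exact hab ((Sum.inl.inj ha).trans (Sum.inl.inj hb).symm)
        · exact absurd hb (by simp [pairGraph])
      · exact absurd ha (by simp [pairGraph])
    · congr 1
      refine Subtype.ext (Sym2.ext_iff.mpr fun y => ?_)
      have := Set.ext_iff.mp h y
      simpa [pairGraph] using this
  · rw [Fintype.card_sum, Sym2.card_subtype_not_diag]
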